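/- Let G = (I_r | A) be an r×n matrix over a field such that every j×j submatrix of A is invertible for all 1 ≤ j ≤ r. Then every r×r column-submatrix of G is invertible. -/

import Mathlib

open Matrix

private lemma aux13 {F : Type*} [Field F] : ∀ (r : ℕ) {m : ℕ} (A : Matrix (Fin r) (Fin m) F),
    (∀ j : ℕ, 1 ≤ j → j ≤ r →
      ∀ (rows : Fin j → Fin r) (cols : Fin j → Fin m),
        Function.Injective rows → Function.Injective cols →
          Matrix.det (A.submatrix rows cols) ≠ 0) →
    ∀ c : Fin r → (Fin r ⊕ Fin m), Function.Injective c →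
      Matrix.det ((Matrix.fromCols (1 : Matrix (Fin r) (Fin r) F) A).submatrix id c) ≠ 0 := by
  intro r
  induction r with
  | zero =>
    intro m A hA c hc
    simp [Matrix.det_isEmpty]
  | succ n IH =>
    intro m A hA c hc
    by_cases h : ∃ k i, c k = Sum.inl i
    · obtain ⟨k0, i0, hk0⟩ := h
      set ρ : Fin n → Fin (n + 1) := i0.succAbove with hρ
      set σ : Fin n → Fin (n + 1) := k0.succAbove with hσ
      have hcol : ∀ q : Fin n, ∃ x : Fin n ⊕ Fin m, Sum.map ρ id x = c (σ q) := by
        intro q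
        cases hcs : c (σ q) with
        | inl i =>
          have hi : i ≠ i0 := by
            intro hii
            apply Fin.succAbove_ne k0 q
            apply hc
            rw [hcs, hk0, hii]
          obtain ⟨p, hp⟩ := Fin.exists_succAbove_eq hi
          exact ⟨Sum.inl p, by simp only [Sum.map_inl]; rw [hρ, hp]⟩
        | inr j => exact ⟨Sum.inr j, rfl⟩
      choose c' hc' using hcol
      have hmapinj : Function.Injective (Sum.map ρ (id : Fin m → Fin m)) :=
        Sum.map_injective.mpr ⟨Fin.succAbove_right_injective, Function.injective_id⟩
      have hc'inj : Function.Injective c' := by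
        intro a b hab
        have : c (σ a) = c (σ b) := by rw [← hc' a, ← hc' b, hab]
        exact Fin.succAbove_right_injective (hc this)
      set A' : Matrix (Fin n) (Fin m) F := A.submatrix ρ id with hA'def
      have hA' : ∀ j : ℕ, 1 ≤ j → j ≤ n →
          ∀ (rows : Fin j → Fin n) (cols : Fin j → Fin m),
            Function.Injective rows → Function.Injective cols →
              Matrix.det (A'.submatrix rows cols) ≠ 0 := by
        intro j h1 h2 rows cols hr hcols
        have : A'.submatrix rows cols = A.submatrix (ρ ∘ rows) cols := by
          ext p q; simp [hA'def, Matrix.submatrix_apply]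
        rw [this]
        exact hA j h1 (by omega) _ _ (Fin.succAbove_right_injective.comp hr) hcols
      have hmat : ((Matrix.fromCols (1 : Matrix (Fin (n+1)) (Fin (n+1)) F) A).submatrix id c).submatrix
          ρ σ = (Matrix.fromCols (1 : Matrix (Fin n) (Fin n) F) A').submatrix id c' := by
        ext p q
        have := hc' q
        simp only [Matrix.submatrix_apply, id]
        cases hq : c' q with
        | inl p' =>
          rw [hq] at this
          simp only [Sum.map_inl] at this
          rw [← this]
          simp only [Matrix.fromCols_apply_inl, Matrix.one_apply]
          by_cases hpp : p = p'
          · simp [hpp]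
          · have : ρ p ≠ ρ p' := fun hh => hpp (Fin.succAbove_right_injective hh)
            simp [hpp, this]
        | inr j =>
          rw [hq] at this
          simp only [Sum.map_inr, id] at this
          rw [← this]
          simp [hA'def]
      have hdet := Matrix.det_succ_column
        ((Matrix.fromCols (1 : Matrix (Fin (n+1)) (Fin (n+1)) F) A).submatrix id c) k0
      have hentry : ∀ i : Fin (n+1),
          ((Matrix.fromCols (1 : Matrix (Fin (n+1)) (Fin (n+1)) F) A).submatrix id c) i k0
            = if i = i0 then 1 else 0 := by
        intro i
        simp [Matrix.submatrix_apply, hk0, Matrix.one_apply]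
      rw [Finset.sum_eq_single i0 (fun i _ hi => by rw [hentry i, if_neg hi]; ring)
        (fun hi => absurd (Finset.mem_univ i0) hi)] at hdet
      rw [hentry i0, if_pos rfl] at hdet
      rw [hdet]
      have h1 : ((-1 : F) ^ ((i0 : ℕ) + (k0 : ℕ))) ≠ 0 :=
        pow_ne_zero _ (neg_ne_zero.mpr one_ne_zero)
      have h2 := IH A' hA' c' hc'inj
      rw [Matrix.submatrix_submatrix] at hmat
      have h3 : Matrix.det ((Matrix.fromCols (1 : Matrix (Fin (n+1)) (Fin (n+1)) F) A).submatrix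
          (id ∘ ρ) (c ∘ σ)) ≠ 0 := by rw [hmat]; exact h2
      intro hzero
      apply h3
      have : (id ∘ ρ) = ρ := rfl
      rw [this]
      have := mul_eq_zero.mp hzero
      rcases this with h | h
      · rcases mul_eq_zero.mp h with h' | h'
        · exact absurd h' h1
        · exact absurd h' one_ne_zero
      · exact h
    · push_neg at h
      have hg : ∀ k, ∃ j, c k = Sum.inr j := by
        intro k
        cases hck : c k with
        | inl i => exact absurd hck (h k i)
        | inr j => exact ⟨j, rfl⟩
      choose g hgc using hg
      have hginj : Function.Injective g := by
        intro a b hab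
        apply hc
        rw [hgc a, hgc b, hab]
      have : (Matrix.fromCols (1 : Matrix (Fin (n+1)) (Fin (n+1)) F) A).submatrix id c
          = A.submatrix id g := by
        ext i k
        simp [Matrix.submatrix_apply, hgc k]
      rw [this]
      exact hA (n+1) (by omega) le_rfl id g Function.injective_id hginj

theorem stmt13 {F : Type*} [Field F] {r m : ℕ} (A : Matrix (Fin r) (Fin m) F)
    (hA : ∀ j : ℕ, 1 ≤ j → j ≤ r →
      ∀ (rows : Fin j → Fin r) (cols : Fin j → Fin m),
        Function.Injective rows → Function.Injective cols →
          Matrix.det (A.submatrix rows cols) ≠ 0) :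
    ∀ c : Fin r → (Fin r ⊕ Fin m), Function.Injective c →
      Matrix.det ((Matrix.fromCols (1 : Matrix (Fin r) (Fin r) F) A).submatrix id c) ≠ 0 :=
  aux13 r A hA
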